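/- Let ℓ be a prime, let V be a 4-dimensional vector space over 𝔽_ℓ = ℤ/ℓℤ with a nondegenerate alternating bilinear form ω, let q ∈ 𝔽_ℓ be nonzero, and let π : V → V be a linear endomorphism satisfying ω(π x, π y) = q·ω(x, y) for all x, y ∈ V. If the characteristic polynomial of π splits into linear factors over 𝔽_ℓ, then there exists a 2-dimensional, π-stable, totally isotropic subspace of V. (This is case (2) of Proposition 'siegel-elkies-sufficient': if χ(A) is totally split modulo ℓ, then ℓ is an Elkies prime for the abelian surface A.) -/

import Mathlib

open Polynomial

/-- Case (2) of Proposition `siegel-elkies-sufficient`: if the characteristic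
polynomial of a symplectic similitude `π` of multiplier `q ≠ 0` on a
4-dimensional symplectic space over `𝔽_ℓ` splits into linear factors, then
there exists a 2-dimensional `π`-stable totally isotropic subspace. -/
theorem siegel_elkies_sufficient_split (ℓ : ℕ) [Fact ℓ.Prime]
    (V : Type*) [AddCommGroup V] [Module (ZMod ℓ) V] [FiniteDimensional (ZMod ℓ) V]
    (hV : Module.finrank (ZMod ℓ) V = 4)
    (ω : V →ₗ[ZMod ℓ] V →ₗ[ZMod ℓ] ZMod ℓ)
    (hAlt : ∀ x : V, ω x x = 0)
    (hNondeg : ∀ x : V, (∀ y : V, ω x y = 0) → x = 0)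
    (q : ZMod ℓ) (hq : q ≠ 0)
    (π : V →ₗ[ZMod ℓ] V)
    (hπ : ∀ x y : V, ω (π x) (π y) = q * ω x y)
    (hsplit : π.charpoly.Splits) :
    ∃ K : Submodule (ZMod ℓ) V,
      Module.finrank (ZMod ℓ) K = 2 ∧
      (∀ x ∈ K, π x ∈ K) ∧
      (∀ x ∈ K, ∀ y ∈ K, ω x y = 0) := by
  classical
  -- skew symmetry
  have hskew : ∀ x y : V, ω y x = - ω x y := by
    intro x y
    have h := hAlt (x + y)
    simp only [map_add, LinearMap.add_apply, hAlt x, hAlt y] at h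
    linear_combination h
  haveI : Nontrivial V := Module.nontrivial_of_finrank_pos (by rw [hV]; norm_num)
  set P := π.charpoly with hPdef
  have hPmonic : P.Monic := π.charpoly_monic
  have hPne : P ≠ 0 := hPmonic.ne_zero
  -- injectivity-like statement
  have hπinj : ∀ x : V, π x = 0 → x = 0 := by
    intro x hx
    apply hNondeg
    intro y
    have h := hπ x y
    rw [hx] at h
    simp only [map_zero, LinearMap.zero_apply] at h
    exact ((mul_eq_zero.mp h.symm).resolve_left hq)
  -- eigenvalue of π
  have hintπ : IsIntegral (ZMod ℓ) (π : Module.End (ZMod ℓ) V) :=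
    ⟨P, hPmonic, by rw [← Polynomial.aeval_def]; exact π.aeval_self_charpoly⟩
  have hdvdπ : minpoly (ZMod ℓ) (π : Module.End (ZMod ℓ) V) ∣ P :=
    minpoly.dvd _ _ π.aeval_self_charpoly
  have hsplitπ : (minpoly (ZMod ℓ) (π : Module.End (ZMod ℓ) V)).Splits :=
    Polynomial.Splits.of_dvd hsplit hPne hdvdπ
  obtain ⟨lam, hlam⟩ := hsplitπ.exists_eval_eq_zero (minpoly.degree_pos hintπ).ne'
  have hEigL : Module.End.HasEigenvalue (π : Module.End (ZMod ℓ) V) lam :=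
    Module.End.hasEigenvalue_of_isRoot hlam
  obtain ⟨v, hv⟩ := hEigL.exists_hasEigenvector
  have hv0 : v ≠ 0 := hv.2
  have hπv : π v = lam • v := hv.apply_eq_smul
  have hlam0 : lam ≠ 0 := by
    intro h
    exact hv0 (hπinj v (by rw [hπv, h, zero_smul]))
  -- W = orthogonal complement of v
  set W : Submodule (ZMod ℓ) V := LinearMap.ker (ω v) with hWdef
  have hvW : v ∈ W := by simp [hWdef, LinearMap.mem_ker, hAlt v]
  have hWstab : ∀ x ∈ W, π x ∈ W := by
    intro y hy
    have h1 : ω (π v) (π y) = q * ω v y := hπ v y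
    rw [hπv, LinearMap.mem_ker.mp hy, mul_zero, map_smul, LinearMap.smul_apply,
      smul_eq_mul] at h1
    exact LinearMap.mem_ker.mpr ((mul_eq_zero.mp h1).resolve_left hlam0)
  -- finrank W = 3
  have hωv : ω v ≠ 0 := by
    intro h0
    exact hv0 (hNondeg v (fun y => by rw [h0]; rfl))
  have hsurj : Function.Surjective (ω v) := by
    obtain ⟨y, hy⟩ := DFunLike.ne_iff.mp hωv
    intro c
    refine ⟨(c * (ω v y)⁻¹) • y, ?_⟩
    rw [map_smul, smul_eq_mul, mul_assoc, inv_mul_cancel₀ hy, mul_one]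
  have hrank : Module.finrank (ZMod ℓ) W = 3 := by
    have h := LinearMap.finrank_range_add_finrank_ker (ω v)
    rw [LinearMap.range_eq_top.mpr hsurj, finrank_top, Module.finrank_self, hV] at h
    rw [hWdef]
    omega
  -- the invariant line inside W
  set S : Submodule (ZMod ℓ) W := Submodule.comap W.subtype (Submodule.span (ZMod ℓ) {v})
    with hSdef
  have hSne : S ≠ ⊤ := by
    intro hS
    have hle : W ≤ Submodule.span (ZMod ℓ) {v} := by
      intro x hx
      have : (⟨x, hx⟩ : W) ∈ S := hS ▸ Submodule.mem_top
      exact this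
    have h1 : Module.finrank (ZMod ℓ) (Submodule.span (ZMod ℓ) {v}) = 1 :=
      finrank_span_singleton hv0
    have := Submodule.finrank_mono hle
    rw [hrank, h1] at this
    omega
  haveI : Nontrivial (W ⧸ S) := Submodule.Quotient.nontrivial_iff.mpr hSne
  set πW : W →ₗ[ZMod ℓ] W := π.restrict hWstab with hπWdef
  have hcoeW : ∀ x : W, (πW x : V) = π (x : V) := fun x =>
    LinearMap.restrict_coe_apply _ _ _
  have hmapS : S ≤ S.comap πW := by
    intro x hx
    obtain ⟨c, hc⟩ := Submodule.mem_span_singleton.mp hx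
    simp only [Submodule.subtype_apply] at hc
    have hgoal : (πW x : V) ∈ Submodule.span (ZMod ℓ) {v} := by
      rw [hcoeW, ← hc]
      simp only [map_smul, hπv]
      exact Submodule.smul_mem _ _
        (Submodule.smul_mem _ _ (Submodule.mem_span_singleton_self v))
    exact hgoal
  set πQ : (W ⧸ S) →ₗ[ZMod ℓ] (W ⧸ S) := Submodule.mapQ S S πW hmapS with hπQdef
  have hmkQ : ∀ x : W, πQ (Submodule.Quotient.mk x) = Submodule.Quotient.mk (πW x) :=
    fun x => Submodule.mapQ_apply _ _ _ _
  -- powers commute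
  have hcoe_pow : ∀ (n : ℕ) (x : W), (((πW ^ n) x : W) : V) = (π ^ n) (x : V) := by
    intro n x
    rw [hπWdef, Module.End.pow_restrict]
    exact LinearMap.restrict_coe_apply _ _ _
  have hmk_pow : ∀ (n : ℕ) (x : W),
      (πQ ^ n) (Submodule.Quotient.mk x) = Submodule.Quotient.mk ((πW ^ n) x) := by
    intro n
    induction n with
    | zero => intro x; simp
    | succ n ih =>
      intro x
      rw [pow_succ', pow_succ']
      simp only [Module.End.mul_apply]
      rw [ih, hmkQ]
  -- Cayley-Hamilton transported to W
  have hannW : ∀ x : W, (Polynomial.aeval πW P) x = 0 := by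
    intro x
    have h1 : (((Polynomial.aeval πW P) x : W) : V) = (Polynomial.aeval π P) (x : V) := by
      simp only [Polynomial.aeval_endomorphism, Polynomial.sum_def,
        AddSubmonoidClass.coe_finset_sum, SetLike.val_smul, hcoe_pow]
    have h2 : (((Polynomial.aeval πW P) x : W) : V) = 0 := by
      rw [h1, hPdef, π.aeval_self_charpoly, LinearMap.zero_apply]
    exact (ZeroMemClass.coe_eq_zero).mp h2
  -- Cayley-Hamilton transported to the quotient
  have hannQ : Polynomial.aeval πQ P = 0 := by
    apply LinearMap.ext
    intro z
    obtain ⟨x, rfl⟩ := Submodule.Quotient.mk_surjective S z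
    rw [Polynomial.aeval_endomorphism, Polynomial.sum_def]
    have : ∀ n ∈ P.support, P.coeff n • (πQ ^ n) (Submodule.Quotient.mk x)
        = S.mkQ (P.coeff n • (πW ^ n) x) := by
      intro n _
      rw [hmk_pow, map_smul, Submodule.mkQ_apply]
    rw [Finset.sum_congr rfl this, ← map_sum]
    have h2 : (∑ n ∈ P.support, P.coeff n • (πW ^ n) x) = (Polynomial.aeval πW P) x := by
      rw [Polynomial.aeval_endomorphism, Polynomial.sum_def]
    rw [h2, hannW, map_zero, LinearMap.zero_apply]
  -- eigenvalue in the quotient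
  have hintQ : IsIntegral (ZMod ℓ) (πQ : Module.End (ZMod ℓ) (W ⧸ S)) :=
    ⟨P, hPmonic, by rw [← Polynomial.aeval_def]; exact hannQ⟩
  have hdvdQ : minpoly (ZMod ℓ) (πQ : Module.End (ZMod ℓ) (W ⧸ S)) ∣ P :=
    minpoly.dvd _ _ hannQ
  have hsplitQ : (minpoly (ZMod ℓ) (πQ : Module.End (ZMod ℓ) (W ⧸ S))).Splits :=
    Polynomial.Splits.of_dvd hsplit hPne hdvdQ
  obtain ⟨μ, hμ⟩ := hsplitQ.exists_eval_eq_zero (minpoly.degree_pos hintQ).ne'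
  have hEigμ : Module.End.HasEigenvalue (πQ : Module.End (ZMod ℓ) (W ⧸ S)) μ :=
    Module.End.hasEigenvalue_of_isRoot hμ
  obtain ⟨wq, hwq⟩ := hEigμ.exists_hasEigenvector
  obtain ⟨w, hw⟩ := Submodule.Quotient.mk_surjective S wq
  have hw0 : (w : V) ∉ Submodule.span (ZMod ℓ) {v} := by
    intro hmem
    apply hwq.2
    rw [← hw, Submodule.Quotient.mk_eq_zero]
    exact hmem
  have hπw : ∃ c : ZMod ℓ, π (w : V) = μ • (w : V) + c • v := by
    have h1 : πQ (Submodule.Quotient.mk w) = μ • Submodule.Quotient.mk w := by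
      rw [hw]; exact hwq.apply_eq_smul
    have h3 : (πW w - μ • w) ∈ S := by
      rw [← Submodule.Quotient.mk_eq_zero]
      show S.mkQ (πW w - μ • w) = 0
      rw [map_sub, map_smul, Submodule.mkQ_apply, Submodule.mkQ_apply, ← hmkQ, h1]
      rw [sub_self]
    obtain ⟨c, hc⟩ := Submodule.mem_span_singleton.mp
      (show ((πW w - μ • w : W) : V) ∈ Submodule.span (ZMod ℓ) {v} from h3)
    have hco : ((πW w - μ • w : W) : V) = π (w : V) - μ • (w : V) := by
      push_cast [hcoeW]
      ring_nf
    rw [hco] at hc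
    refine ⟨c, ?_⟩
    rw [hc]
    abel
  obtain ⟨c, hc⟩ := hπw
  -- the Lagrangian
  refine ⟨Submodule.span (ZMod ℓ) {v, (w : V)}, ?_, ?_, ?_⟩
  · -- dimension 2
    have hli : LinearIndependent (ZMod ℓ) ![v, (w : V)] := by
      rw [LinearIndependent.pair_iff' hv0]
      intro a ha
      exact hw0 (ha ▸ Submodule.smul_mem _ _ (Submodule.mem_span_singleton_self v))
    have := finrank_span_eq_card hli
    rwa [Matrix.range_cons_cons_empty, Fintype.card_fin] at this
  · -- stability
    intro x hx
    have hle : Submodule.span (ZMod ℓ) {v, (w : V)} ≤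
        Submodule.comap π (Submodule.span (ZMod ℓ) {v, (w : V)}) := by
      rw [Submodule.span_le]
      rintro x (rfl | rfl)
      · refine Submodule.mem_comap.mpr ?_
        rw [hπv]
        exact Submodule.smul_mem _ _ (Submodule.subset_span (Set.mem_insert _ _))
      · refine Submodule.mem_comap.mpr ?_
        rw [hc]
        exact Submodule.add_mem _
          (Submodule.smul_mem _ _ (Submodule.subset_span (Set.mem_insert_of_mem _ rfl)))
          (Submodule.smul_mem _ _ (Submodule.subset_span (Set.mem_insert _ _)))
    exact hle hx
  · -- isotropy
    intro x hx y hy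
    have hvw : ω v (w : V) = 0 := LinearMap.mem_ker.mp w.2
    refine Submodule.span_induction₂
      (p := fun x y _ _ => ω x y = 0) ?_ ?_ ?_ ?_ ?_ ?_ ?_ hx hy
    · rintro a b (rfl | rfl) (rfl | rfl)
      · exact hAlt _
      · exact hvw
      · rw [hskew, hvw, neg_zero]
      · exact hAlt _
    · intro y _; simp
    · intro x _; simp
    · intro a b z _ _ _ h1 h2; rw [map_add, LinearMap.add_apply, h1, h2, add_zero]
    · intro a b z _ _ _ h1 h2; rw [map_add, h1, h2, add_zero]
    · intro r a b _ _ h1; rw [map_smul, LinearMap.smul_apply, h1, smul_zero]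
    · intro r a b _ _ h1; rw [map_smul, h1, smul_zero]
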